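/- Let z_1, …, z_M be complex numbers with Re(z_m) ≤ 0 for every m ∈ {1,…,M}. Then |∏_{m=1}^M 1/(1 − z_m) − ∏_{m=1}^M e^{z_m}| ≤ ∑_{m=1}^M min{2, |z_m|² e^{−Re(z_m)}}. -/

import Mathlib

open Finset intervalIntegral

-- telescoping product bound
lemma tele {ι : Type*} [DecidableEq ι] (s : Finset ι) (a b : ι → ℂ)
    (ha : ∀ i ∈ s, ‖a i‖ ≤ 1) (hb : ∀ i ∈ s, ‖b i‖ ≤ 1) :
    ‖∏ i ∈ s, a i - ∏ i ∈ s, b i‖ ≤ ∑ i ∈ s, ‖a i - b i‖ := by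
  induction s using Finset.induction_on with
  | empty => simp
  | @insert i s his ih =>
    rw [Finset.prod_insert his, Finset.prod_insert his, Finset.sum_insert his]
    have key : a i * ∏ j ∈ s, a j - b i * ∏ j ∈ s, b j
        = a i * (∏ j ∈ s, a j - ∏ j ∈ s, b j) + (a i - b i) * ∏ j ∈ s, b j := by ring
    rw [key]
    have h1 : ‖a i * (∏ j ∈ s, a j - ∏ j ∈ s, b j)‖
        ≤ ∑ j ∈ s, ‖a j - b j‖ := by
      rw [norm_mul]
      calc ‖a i‖ * ‖∏ j ∈ s, a j - ∏ j ∈ s, b j‖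
          ≤ 1 * (∑ j ∈ s, ‖a j - b j‖) := by
            apply mul_le_mul (ha i (Finset.mem_insert_self i s))
              (ih (fun j hj => ha j (Finset.mem_insert_of_mem hj))
                  (fun j hj => hb j (Finset.mem_insert_of_mem hj)))
              (by positivity) zero_le_one
        _ = _ := one_mul _
    have h2 : ‖(a i - b i) * ∏ j ∈ s, b j‖ ≤ ‖a i - b i‖ := by
      rw [norm_mul, norm_prod]
      calc ‖a i - b i‖ * ∏ j ∈ s, ‖b j‖
          ≤ ‖a i - b i‖ * 1 := by
            apply mul_le_mul_of_nonneg_left _ (by positivity)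
            exact Finset.prod_le_one (fun j _ => by positivity)
              (fun j hj => hb j (Finset.mem_insert_of_mem hj))
        _ = _ := mul_one _
    calc ‖_‖ ≤ _ + _ := norm_add_le _ _
      _ ≤ ‖a i - b i‖ + ∑ j ∈ s, ‖a j - b j‖ := by
          rw [add_comm]; exact add_le_add h2 h1

lemma one_sub_ne (z : ℂ) (hz : z.re ≤ 0) : ‖1 - z‖ ≥ 1 := by
  calc (1:ℝ) ≤ (1 - z).re := by simp [Complex.sub_re]; linarith
    _ ≤ |(1 - z).re| := le_abs_self _
    _ ≤ ‖1 - z‖ := Complex.abs_re_le_norm _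

lemma key_int (z : ℂ) (hz : z.re ≤ 0) :
    ‖1 - (1 - z) * Complex.exp z‖ ≤ ‖z‖ ^ 2 / 2 := by
  set g : ℝ → ℂ := fun t => ((t:ℂ) * z - 1) * Complex.exp ((t:ℂ) * z) with hg
  set g' : ℝ → ℂ := fun t => (t:ℂ) * z ^ 2 * Complex.exp ((t:ℂ) * z) with hg'
  have hderiv : ∀ t ∈ Set.uIcc (0:ℝ) 1, HasDerivAt g (g' t) t := by
    intro t _
    have h0 : HasDerivAt (fun t : ℝ => ((t:ℂ) * z)) z t := by
      simpa using (Complex.ofRealCLM.hasDerivAt (x := t)).mul_const z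
    have h1 : HasDerivAt (fun t : ℝ => ((t:ℂ) * z - 1)) z t := h0.sub_const 1
    have h2 : HasDerivAt (fun t : ℝ => Complex.exp ((t:ℂ) * z))
        (Complex.exp ((t:ℂ) * z) * z) t := h0.cexp
    have := h1.mul h2
    convert this using 1
    · rfl
    · rfl
    simp only [g']
    ring
  have hcont : Continuous g' := by
    apply Continuous.mul
    · exact (Complex.continuous_ofReal.mul continuous_const)
    · exact Complex.continuous_exp.comp (Complex.continuous_ofReal.mul continuous_const)
  have hint : IntervalIntegrable g' MeasureTheory.volume 0 1 := hcont.intervalIntegrable 0 1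
  have heq : ∫ t in (0:ℝ)..1, g' t = g 1 - g 0 :=
    intervalIntegral.integral_eq_sub_of_hasDerivAt hderiv hint
  have hval : g 1 - g 0 = 1 - (1 - z) * Complex.exp z := by
    simp only [hg]
    push_cast
    simp [Complex.exp_zero]
    ring
  have hnorm : ‖∫ t in (0:ℝ)..1, g' t‖ ≤ |∫ t in (0:ℝ)..1, t * ‖z‖ ^ 2| := by
    apply intervalIntegral.norm_integral_le_abs_of_norm_le
    · filter_upwards [MeasureTheory.ae_restrict_mem measurableSet_uIoc] with t ht
      rw [Set.uIoc_of_le (by norm_num : (0:ℝ) ≤ 1)] at ht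
      simp only [hg', norm_mul, Complex.norm_exp, norm_pow,
        Complex.norm_real, Real.norm_eq_abs]
      have ht0 : 0 < t := ht.1
      have ht1 : t ≤ 1 := ht.2
      rw [abs_of_pos ht0]
      have : ((t:ℂ) * z).re = t * z.re := by simp
      rw [this]
      have : Real.exp (t * z.re) ≤ 1 := by
        apply Real.exp_le_one_iff.mpr
        exact mul_nonpos_of_nonneg_of_nonpos ht0.le hz
      have hnn : 0 ≤ t * ‖z‖ ^ 2 := by positivity
      calc t * ‖z‖ ^ 2 * Real.exp (t * z.re) ≤ t * ‖z‖ ^ 2 :=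
            mul_le_of_le_one_right hnn this
        _ = t * ‖z‖ ^ 2 := rfl
    · exact ((continuous_id.mul continuous_const).intervalIntegrable 0 1)
  have hcomp : |∫ t in (0:ℝ)..1, t * ‖z‖ ^ 2| = ‖z‖ ^ 2 / 2 := by
    rw [intervalIntegral.integral_mul_const, integral_id]
    rw [abs_of_nonneg (by positivity)]
    ring
  calc ‖1 - (1 - z) * Complex.exp z‖
      = ‖∫ t in (0:ℝ)..1, g' t‖ := by rw [heq, hval]
    _ ≤ ‖z‖ ^ 2 / 2 := by rw [← hcomp]; exact hnorm

lemma term_bound (z : ℂ) (hz : z.re ≤ 0) :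
    ‖(1 - z)⁻¹ - Complex.exp z‖
      ≤ min 2 (‖z‖ ^ 2 * Real.exp (-z.re)) := by
  have h1 : ‖1 - z‖ ≥ 1 := one_sub_ne z hz
  have hne : (1 - z) ≠ 0 := by
    intro h; rw [h] at h1; simp at h1; linarith
  have hainv : ‖(1 - z)⁻¹‖ ≤ 1 := by
    rw [norm_inv]; exact inv_le_one_of_one_le₀ h1
  have hexp : ‖Complex.exp z‖ ≤ 1 := by
    rw [Complex.norm_exp]; exact Real.exp_le_one_iff.mpr hz
  refine le_min ?_ ?_
  · calc ‖(1 - z)⁻¹ - Complex.exp z‖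
        ≤ ‖(1 - z)⁻¹‖ + ‖Complex.exp z‖ := norm_sub_le _ _
      _ ≤ 2 := by linarith
  · have hfact : (1 - z)⁻¹ - Complex.exp z = (1 - z)⁻¹ * (1 - (1 - z) * Complex.exp z) := by
      field_simp
    rw [hfact, norm_mul]
    have h2 := key_int z hz
    have h3 : Real.exp (-z.re) ≥ 1 := Real.one_le_exp (by linarith)
    calc ‖(1 - z)⁻¹‖ * ‖1 - (1 - z) * Complex.exp z‖
        ≤ 1 * (‖z‖ ^ 2 / 2) := mul_le_mul hainv h2 (by positivity) zero_le_one
      _ ≤ ‖z‖ ^ 2 * Real.exp (-z.re) := by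
          nlinarith [norm_nonneg z, sq_nonneg (‖z‖)]

/-- Combination of Lemmas 3 and 4 of the paper: for `z_1, …, z_M` with `Re (z_m) ≤ 0`,
`|∏ 1/(1 - z_m) - ∏ exp z_m| ≤ ∑ min {2, |z_m|² e^{-Re z_m}}`. -/
theorem product_inv_sub_product_exp_bound_sq (M : ℕ) (z : Fin M → ℂ)
    (hz : ∀ m, (z m).re ≤ 0) :
    ‖∏ m, (1 - z m)⁻¹ - ∏ m, Complex.exp (z m)‖ ≤
      ∑ m, min 2 (‖z m‖ ^ 2 * Real.exp (-(z m).re)) := by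
  calc ‖∏ m, (1 - z m)⁻¹ - ∏ m, Complex.exp (z m)‖
      ≤ ∑ m, ‖(1 - z m)⁻¹ - Complex.exp (z m)‖ := by
        classical
        apply tele
        · intro i _
          rw [norm_inv]
          exact inv_le_one_of_one_le₀ (one_sub_ne (z i) (hz i))
        · intro i _
          rw [Complex.norm_exp]
          exact Real.exp_le_one_iff.mpr (hz i)
    _ ≤ ∑ m, min 2 (‖z m‖ ^ 2 * Real.exp (-(z m).re)) :=
        Finset.sum_le_sum fun m _ => term_bound (z m) (hz m)
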